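/- Let X be a subspace of a Dieudonné complete space Y such that for every point y ∈ Y \ X there exists a Gδ-set V in Y with y ∈ V and V ⊆ Y \ X. Then X is Dieudonné complete. -/

import Mathlib

open Filter Topology Set

universe u v

/-- A space is Dieudonné complete if it embeds as a closed subspace of a
product of metric spaces. -/
def DieudonneComplete (X : Type u) [TopologicalSpace X] : Prop :=
  ∃ (ι : Type u) (M : ι → Type u) (m : ∀ i, MetricSpace (M i)) (f : X → ∀ i, M i),
    letI : ∀ i, TopologicalSpace (M i) := fun i => (m i).toUniformSpace.toTopologicalSpace
    Topology.IsClosedEmbedding f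

/-- A subspace of a Dieudonné complete space whose complement is a union of
Gδ-sets is Dieudonné complete. -/

lemma exists_sep_of_isGdelta {Y : Type*} [TopologicalSpace Y] [T35Space Y]
    {V : Set Y} (hV : IsGδ V) {y : Y} (hy : y ∈ V) :
    ∃ φ : Y → ℝ, Continuous φ ∧ (∀ z, 0 ≤ φ z) ∧ φ y = 0 ∧ ∀ z ∉ V, 0 < φ z := by
  obtain ⟨U, hUo, hVeq⟩ := hV.eq_iInter_nat
  have hyU : ∀ n, y ∉ (U n)ᶜ := by
    intro n hn; exact hn (by { rw [hVeq] at hy; exact mem_iInter.1 hy n })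
  choose g hgc hgy hgK using fun n =>
    CompletelyRegularSpace.completely_regular y (U n)ᶜ (hUo n).isClosed_compl (hyU n)
  set φ : Y → ℝ := fun z => ∑' n, ((g n z : ℝ)) * (1/2) ^ n with hφ
  have hbd : ∀ n (z : Y), ‖((g n z : ℝ)) * (1/2) ^ n‖ ≤ (1/2 : ℝ) ^ n := by
    intro n z
    rw [norm_mul, norm_pow]
    have h1 : ‖((g n z : ℝ))‖ ≤ 1 := by
      rw [Real.norm_eq_abs, abs_of_nonneg (g n z).2.1]
      exact (g n z).2.2
    calc ‖((g n z : ℝ))‖ * ‖(1/2 : ℝ)‖ ^ n ≤ 1 * ‖(1/2 : ℝ)‖ ^ n := by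
          gcongr
      _ = (1/2 : ℝ) ^ n := by
          rw [one_mul]; congr 1; rw [Real.norm_eq_abs, abs_of_nonneg]; norm_num
  have hsum : Summable (fun n => (1/2 : ℝ) ^ n) := summable_geometric_of_lt_one (by norm_num) (by norm_num)
  have hcont : Continuous φ := continuous_tsum
    (fun n => (continuous_subtype_val.comp (hgc n)).mul continuous_const) hsum hbd
  have hnn : ∀ z, 0 ≤ φ z := by
    intro z
    exact tsum_nonneg fun n => mul_nonneg (g n z).2.1 (by positivity)
  refine ⟨φ, hcont, hnn, ?_, ?_⟩
  · simp only [hφ]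
    have : ∀ n, ((g n y : ℝ)) * (1/2) ^ n = 0 := by
      intro n; rw [hgy n]; simp
    rw [tsum_congr this, tsum_zero]
  · intro z hz
    rw [hVeq, mem_iInter] at hz
    push_neg at hz
    obtain ⟨m, hm⟩ := hz
    have hterm : ((g m z : ℝ)) * (1/2) ^ m = (1/2 : ℝ) ^ m := by
      rw [hgK m hm]; simp
    have hsz : Summable (fun n => ((g n z : ℝ)) * (1/2) ^ n) :=
      hsum.of_norm_bounded (fun n => hbd n z)
    have := Summable.le_tsum hsz m (fun n _ => mul_nonneg (g n z).2.1 (by positivity))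
    rw [hterm] at this
    exact lt_of_lt_of_le (by positivity) this

theorem dieudonneComplete_of_gdelta_complement (Y : Type u) [TopologicalSpace Y]
    [T35Space Y] (hY : DieudonneComplete Y) (X : Set Y)
    (hGdelta : ∀ y ∈ Xᶜ, ∃ V : Set Y, IsGδ V ∧ y ∈ V ∧ V ⊆ Xᶜ) :
    DieudonneComplete X := by
  obtain ⟨ι, M, m, g, hg⟩ := hY
  have key : ∀ w : ↥(Xᶜ), ∃ φ : Y → ℝ, Continuous φ ∧ (∀ z, 0 ≤ φ z) ∧ φ w.1 = 0 ∧
      ∀ z ∈ X, 0 < φ z := by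
    rintro ⟨y, hy⟩
    obtain ⟨V, hVGδ, hyV, hVsub⟩ := hGdelta y hy
    obtain ⟨φ, hc, h0, hy0, hpos⟩ := exists_sep_of_isGdelta hVGδ hyV
    exact ⟨φ, hc, h0, hy0, fun z hz => hpos z (fun hzV => hVsub hzV hz)⟩
  choose φ hφc hφ0 hφv hφpos using key
  letI : ∀ i, TopologicalSpace (M i) := fun i => (m i).toUniformSpace.toTopologicalSpace
  replace hg : Topology.IsClosedEmbedding g := hg
  set κ : Type u := ι ⊕ ↥(Xᶜ) with hκ
  set N : κ → Type u := fun j => Sum.rec (fun i => M i) (fun _ => ULift.{u} ℝ) j with hN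
  set n : ∀ j, MetricSpace (N j) :=
    fun j => Sum.rec (motive := fun j => MetricSpace (N j)) m (fun _ => inferInstance) j with hn
  letI tPi : TopologicalSpace (∀ j, N j) :=
    @Pi.topologicalSpace κ N (fun j => (n j).toUniformSpace.toTopologicalSpace)
  set F : X → ∀ j, N j := fun x => fun j =>
    Sum.rec (motive := fun j => N j) (fun i => g x.1 i)
      (fun w => ULift.up ((φ w x.1)⁻¹)) j with hF
  refine ⟨κ, N, n, F, ?_⟩
  show @Topology.IsClosedEmbedding ↥X (∀ j, N j) instTopologicalSpaceSubtype tPi F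
  have hgval : Continuous fun x : X => g x.1 := hg.continuous.comp continuous_subtype_val
  have hFc : Continuous F := by
    apply continuous_pi
    rintro (i | w)
    · exact (continuous_apply i).comp hgval
    · have h1 : Continuous fun x : X => (φ w x.1)⁻¹ := by
        apply Continuous.inv₀ ((hφc w).comp continuous_subtype_val)
        exact fun x => ne_of_gt (hφpos w x.1 x.2)
      exact continuous_uliftUp.comp h1
  set proj : (∀ j, N j) → (∀ i, M i) := fun p i => p (Sum.inl i) with hproj
  have hprojc : Continuous proj :=
    continuous_pi fun i => @continuous_apply κ N (fun j => (n j).toUniformSpace.toTopologicalSpace) (Sum.inl i)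
  have hew : ∀ w : ↥(Xᶜ), Continuous fun q : (∀ j, N j) => (q (Sum.inr w)).down := by
    intro w
    exact continuous_uliftDown.comp (@continuous_apply κ N (fun j => (n j).toUniformSpace.toTopologicalSpace) (Sum.inr w))
  have hemb : Topology.IsEmbedding F := by
    apply Topology.IsEmbedding.of_comp hFc hprojc
    exact hg.isEmbedding.comp Topology.IsEmbedding.subtypeVal
  refine ⟨hemb, ?_⟩
  rw [isClosed_iff_clusterPt]
  intro p hp
  rw [← mem_closure_iff_clusterPt] at hp
  set G : Filter X := Filter.comap F (𝓝 p) with hG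
  haveI : G.NeBot := by
    rw [hG, Filter.comap_neBot_iff]
    intro s hs
    rw [mem_closure_iff_nhds] at hp
    obtain ⟨q, hq1, x, hx⟩ := hp s hs
    exact ⟨x, hx ▸ hq1⟩
  have hFt : Tendsto F G (𝓝 p) := tendsto_comap
  have hgt : Tendsto (fun x : X => g x.1) G (𝓝 (proj p)) :=
    (hprojc.tendsto p).comp hFt
  have hmem : proj p ∈ Set.range g := by
    have hcl : proj p ∈ closure (Set.range g) :=
      mem_closure_of_tendsto hgt (Eventually.of_forall fun x => Set.mem_range_self _)
    rwa [hg.isClosed_range.closure_eq] at hcl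
  obtain ⟨y₀, hy₀⟩ := hmem
  have hvt : Tendsto (fun x : X => x.1) G (𝓝 y₀) := by
    rw [hg.isInducing.tendsto_nhds_iff]
    rw [hy₀]; exact hgt
  have hcomp : ∀ w : ↥(Xᶜ),
      Tendsto (fun x : X => (φ w x.1)⁻¹) G (𝓝 ((p (Sum.inr w)).down)) := by
    intro w
    exact ((hew w).tendsto p).comp hFt
  by_cases hy₀X : y₀ ∈ X
  · refine ⟨⟨y₀, hy₀X⟩, ?_⟩
    funext j
    rcases j with i | w
    · exact congrFun hy₀ i
    · have h2 : Tendsto (fun x : X => (φ w x.1)⁻¹) G (𝓝 ((φ w y₀)⁻¹)) := by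
        have h3 : Tendsto (fun x : X => φ w x.1) G (𝓝 (φ w y₀)) :=
          ((hφc w).tendsto y₀).comp hvt
        exact h3.inv₀ (ne_of_gt (hφpos w y₀ hy₀X))
      have h4 := tendsto_nhds_unique h2 (hcomp w)
      show ULift.up ((φ w y₀)⁻¹) = p (Sum.inr w)
      exact ULift.down_injective h4
  · exfalso
    set w : ↥(Xᶜ) := ⟨y₀, hy₀X⟩ with hw
    have h3 : Tendsto (fun x : X => φ w x.1) G (𝓝[>] 0) := by
      apply tendsto_nhdsWithin_of_tendsto_nhds_of_eventually_within
      · have h5 := ((hφc w).tendsto y₀).comp hvt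
        rwa [show φ w y₀ = 0 from hφv w] at h5
      · exact Eventually.of_forall fun x => hφpos w x.1 x.2
    have h4 : Tendsto (fun x : X => (φ w x.1)⁻¹) G atTop := by
      have h6 := h3.inv_tendsto_nhdsGT_zero
      simpa [Pi.inv_def] using h6
    exact not_tendsto_atTop_of_tendsto_nhds (hcomp w) h4
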